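/- For (q1, q2, p1, p2) with q1 ≠ 0, define u1 = q2 + sqrt(q1^2 + q2^2), u2 = q2 - sqrt(q1^2 + q2^2) and p_{u_i} = p2/2 + p1*q1/(2*u_i) for i = 1, 2. Then for each i the separated relation p_{u_i}^2 - a*u_i^3 = H1/4 - H2/u_i holds, where H1 = p1^2 + p2^2 - 16*a*q2*(q1^2 + 2*q2^2) and H2 = a*q1^2*(q1^2 + 4*q2^2) + p1*(q2*p1 - q1*p2)/2. -/

import Mathlib

theorem henon_heiles_separated_relations (a q1 q2 p1 p2 : ℝ) (hq : q1 ≠ 0) :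
    let u1 := q2 + Real.sqrt (q1^2 + q2^2)
    let u2 := q2 - Real.sqrt (q1^2 + q2^2)
    let pu1 := p2 / 2 + p1 * q1 / (2 * u1)
    let pu2 := p2 / 2 + p1 * q1 / (2 * u2)
    let H1 := p1^2 + p2^2 - 16 * a * q2 * (q1^2 + 2 * q2^2)
    let H2 := a * q1^2 * (q1^2 + 4 * q2^2) + p1 * (q2 * p1 - q1 * p2) / 2
    pu1^2 - a * u1^3 = H1 / 4 - H2 / u1 ∧
    pu2^2 - a * u2^3 = H1 / 4 - H2 / u2 := by
  intro u1 u2 pu1 pu2 H1 H2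
  set s := Real.sqrt (q1^2 + q2^2) with hs
  have hs2 : s ^ 2 = q1 ^ 2 + q2 ^ 2 := Real.sq_sqrt (by positivity)
  have hu12 : u1 * u2 = -q1 ^ 2 := by
    show (q2 + s) * (q2 - s) = -q1 ^ 2
    linear_combination -hs2
  have hq2 : q1 ^ 2 ≠ 0 := pow_ne_zero _ hq
  have hu1 : u1 ≠ 0 := by
    intro h
    rw [h, zero_mul] at hu12
    exact hq2 (by linarith)
  have hu2 : u2 ≠ 0 := by
    intro h
    rw [h, mul_zero] at hu12
    exact hq2 (by linarith)
  constructor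
  · show (p2 / 2 + p1 * q1 / (2 * (q2 + s)))^2 - a * (q2 + s)^3 = H1 / 4 - H2 / (q2 + s)
    have h1 : (q2 + s) ≠ 0 := hu1
    field_simp [H1, H2]
    linear_combination ((-16)*a*s^3 + (-80)*a*q2*s^2 + (-176)*a*q2^2*s + (-16)*a*q1^2*s + (-112)*a*q2^3 + (-4)*p1^2 + (-16)*a*q1^2*q2) * hs2
  · show (p2 / 2 + p1 * q1 / (2 * (q2 - s)))^2 - a * (q2 - s)^3 = H1 / 4 - H2 / (q2 - s)
    have h2 : (q2 - s) ≠ 0 := hu2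
    field_simp [H1, H2]
    linear_combination ((16)*a*s^3 + (-80)*a*q2*s^2 + (176)*a*q2^2*s + (16)*a*q1^2*s + (-112)*a*q2^3 + (-4)*p1^2 + (-16)*a*q1^2*q2) * hs2
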